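/- arXiv:1803.10302 — 4 statements merged into one kernel-verified Lean document; each statement's English description precedes it below -/
import Mathlib

section
/- For the weight w(x) = ∏_{α∈R} |⟨α,x⟩|^{k(α)} associated with a normalized root system R and nonnegative multiplicity k, there is a constant C > 0 such that for all x ∈ ℝ^N and r > 0, C^{-1} r^N ∏_{α∈R}(|⟨x,α⟩| + r)^{k(α)} ≤ w(B(x,r)) ≤ C r^N ∏_{α∈R}(|⟨x,α⟩| + r)^{k(α)}. -/
open MeasureTheory Metric Finset
open scoped RealInnerProductSpace ENNReal

private lemma coord_abs_le_norm {N : ℕ} (x : EuclideanSpace ℝ (Fin N)) (i : Fin N) :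
    |x i| ≤ ‖x‖ := by
  have h := abs_real_inner_le_norm (EuclideanSpace.single i (1:ℝ)) x
  simpa [EuclideanSpace.inner_single_left, EuclideanSpace.norm_single] using h

private lemma slab_vol {N : ℕ} (e : EuclideanSpace ℝ (Fin N)) (he : ‖e‖ = 1)
    (c : EuclideanSpace ℝ (Fin N)) (r δ : ℝ) :
    volume {y : EuclideanSpace ℝ (Fin N) | y ∈ ball c r ∧ |⟪e, y⟫| < δ} ≤
      ENNReal.ofReal (2*δ) * ENNReal.ofReal (2*r) ^ (N-1) := by
  have hN : 0 < N := by
    rcases Nat.eq_zero_or_pos N with h | h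
    · exfalso; subst h
      have : e = 0 := Subsingleton.elim e 0
      rw [this, norm_zero] at he; norm_num at he
    · exact h
  set i₀ : Fin N := ⟨0, hN⟩
  have horth : Orthonormal ℝ (({i₀} : Set (Fin N)).restrict (fun _ => e)) := by
    rw [orthonormal_iff_ite]
    rintro ⟨i, hi⟩ ⟨j, hj⟩
    simp only [Set.mem_singleton_iff] at hi hj
    subst hi; subst hj
    rw [if_pos rfl]
    show ⟪e, e⟫ = 1
    rw [real_inner_self_eq_norm_mul_norm, he]; norm_num
  obtain ⟨b, hb⟩ := horth.exists_orthonormalBasis_extension_of_card_eq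
    (by simp [finrank_euclideanSpace])
  have hbe : b i₀ = e := hb i₀ rfl
  set c' : EuclideanSpace ℝ (Fin N) := b.repr c
  set T : Set (EuclideanSpace ℝ (Fin N)) :=
    {v | ∀ i, v i ∈ (if i = i₀ then Set.Ioo (-δ) δ else Set.Ioo (c' i - r) (c' i + r))}
  have hsub : {y : EuclideanSpace ℝ (Fin N) | y ∈ ball c r ∧ |⟪e, y⟫| < δ} ⊆ b.repr ⁻¹' T := by
    rintro y ⟨hy1, hy2⟩ i
    by_cases hi : i = i₀
    · subst hi
      have : ⟪e, y⟫ = b.repr y i₀ := by rw [← hbe, b.repr_apply_apply]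
      simp only [if_pos rfl, Set.mem_Ioo]
      rw [← this]
      constructor <;> [linarith [neg_abs_le ⟪e,y⟫]; linarith [le_abs_self ⟪e,y⟫]]
    · have h1 : |b.repr y i - c' i| ≤ ‖b.repr y - b.repr c‖ := by
        have := coord_abs_le_norm (b.repr y - b.repr c) i
        simpa [c'] using this
      have h2 : ‖b.repr y - b.repr c‖ < r := by
        rw [← map_sub, b.repr.norm_map]
        simpa [mem_ball, dist_eq_norm] using hy1
      simp only [if_neg hi, Set.mem_Ioo]
      have := (abs_lt.1 (lt_of_le_of_lt h1 h2))
      constructor <;> linarith [this.1, this.2]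
  have hTmeas : MeasurableSet T := by
    have : T = (MeasurableEquiv.toLp 2 (Fin N → ℝ)).symm ⁻¹' Set.pi Set.univ
        (fun i => if i = i₀ then Set.Ioo (-δ) δ else Set.Ioo (c' i - r) (c' i + r)) := by
      ext v; exact (Set.mem_univ_pi).symm
    rw [this]
    exact (MeasurableEquiv.toLp 2 (Fin N → ℝ)).symm.measurable
      (MeasurableSet.univ_pi (fun i => by split <;> exact measurableSet_Ioo))
  calc volume {y : EuclideanSpace ℝ (Fin N) | y ∈ ball c r ∧ |⟪e, y⟫| < δ}
      ≤ volume (b.repr ⁻¹' T) := measure_mono hsub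
    _ = volume T := b.measurePreserving_repr.measure_preimage hTmeas.nullMeasurableSet
    _ ≤ ENNReal.ofReal (2*δ) * ENNReal.ofReal (2*r) ^ (N-1) := by
        have hT : T = ((MeasurableEquiv.toLp 2 (Fin N → ℝ)).symm) ⁻¹'
            (Set.pi Set.univ
              (fun i => if i = i₀ then Set.Ioo (-δ) δ else Set.Ioo (c' i - r) (c' i + r))) := by
          ext v
          constructor
          · intro h; exact Set.mem_univ_pi.2 h
          · intro h; exact Set.mem_univ_pi.1 h
        rw [hT, (EuclideanSpace.volume_preserving_symm_measurableEquiv_toLp (Fin N)).measure_preimage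
            (MeasurableSet.univ_pi
              (fun i => by split <;> exact measurableSet_Ioo)).nullMeasurableSet,
          volume_pi_pi]
        rw [← Finset.mul_prod_erase Finset.univ _ (Finset.mem_univ i₀)]
        simp only [if_pos rfl]
        have h1 : volume (Set.Ioo (-δ) δ) ≤ ENNReal.ofReal (2*δ) := by
          rw [Real.volume_Ioo]; apply ENNReal.ofReal_le_ofReal; ring_nf; rfl
        have h2 : ∀ i ∈ Finset.univ.erase i₀,
            volume (if i = i₀ then Set.Ioo (-δ) δ else Set.Ioo (c' i - r) (c' i + r))
              ≤ ENNReal.ofReal (2*r) := by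
          intro i hi
          rw [if_neg (Finset.mem_erase.1 hi).1, Real.volume_Ioo]
          apply ENNReal.ofReal_le_ofReal; ring_nf; rfl
        calc volume (Set.Ioo (-δ) δ) * ∏ i ∈ Finset.univ.erase i₀,
              volume (if i = i₀ then Set.Ioo (-δ) δ else Set.Ioo (c' i - r) (c' i + r))
            ≤ ENNReal.ofReal (2*δ) * ∏ _i ∈ Finset.univ.erase i₀, ENNReal.ofReal (2*r) :=
              mul_le_mul' h1 (Finset.prod_le_prod' h2)
          _ = ENNReal.ofReal (2*δ) * ENNReal.ofReal (2*r) ^ (N-1) := by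
              rw [Finset.prod_const]
              congr 1
              rw [Finset.card_erase_of_mem (Finset.mem_univ i₀), Finset.card_univ,
                Fintype.card_fin]
set_option maxHeartbeats 1000000 in
/-- Two-sided estimate for the Dunkl-weight measure of Euclidean balls. -/
theorem dunkl_measure_ball_comparable (N : ℕ) (R : Finset (EuclideanSpace ℝ (Fin N)))
    (hR0 : ∀ α ∈ R, α ≠ 0) (hRnorm : ∀ α ∈ R, ‖α‖ = Real.sqrt 2)
    (hRrefl : ∀ α ∈ R, ∀ β ∈ R, β - ⟪β, α⟫ • α ∈ R)
    (k : EuclideanSpace ℝ (Fin N) → ℝ) (hk : ∀ α ∈ R, 0 ≤ k α)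
    (hkinv : ∀ α ∈ R, ∀ β ∈ R, k (β - ⟪β, α⟫ • α) = k β)
    (w : EuclideanSpace ℝ (Fin N) → ℝ)
    (hw : ∀ x, w x = ∏ α ∈ R, |⟪α, x⟫| ^ (k α)) :
    ∃ C : ℝ, 0 < C ∧ ∀ (x : EuclideanSpace ℝ (Fin N)) (r : ℝ), 0 < r →
      C⁻¹ * (r ^ N * ∏ α ∈ R, (|⟪x, α⟫| + r) ^ (k α)) ≤ (∫ y in ball x r, w y) ∧
      (∫ y in ball x r, w y) ≤ C * (r ^ N * ∏ α ∈ R, (|⟪x, α⟫| + r) ^ (k α)) := by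
  classical
  have hs1 : (1:ℝ) ≤ Real.sqrt 2 := by
    nlinarith [Real.sq_sqrt (by norm_num : (0:ℝ) ≤ 2), Real.sqrt_nonneg 2]
  have hs2 : Real.sqrt 2 ≤ 1.5 := by
    nlinarith [Real.sq_sqrt (by norm_num : (0:ℝ) ≤ 2), Real.sqrt_nonneg 2]
  have hs0 : (0:ℝ) < Real.sqrt 2 := lt_of_lt_of_le one_pos hs1
  have hvfin : volume (ball (0 : EuclideanSpace ℝ (Fin N)) 1) ≠ ⊤ := measure_ball_lt_top.ne
  obtain ⟨vt, hvt0, hvtv⟩ : ∃ vt : ℝ, 0 < vt ∧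
      volume (ball (0 : EuclideanSpace ℝ (Fin N)) 1) = ENNReal.ofReal vt :=
    ⟨(volume (ball (0 : EuclideanSpace ℝ (Fin N)) 1)).toReal,
      ENNReal.toReal_pos (measure_ball_pos volume 0 one_pos).ne' hvfin,
      (ENNReal.ofReal_toReal hvfin).symm⟩
  have hvolball : ∀ (x : EuclideanSpace ℝ (Fin N)) (r : ℝ), 0 < r →
      volume (ball x r) = ENNReal.ofReal (r^N * vt) := by
    intro x r hr
    rw [Measure.addHaar_ball_of_pos volume x hr, finrank_euclideanSpace_fin, hvtv,
      ← ENNReal.ofReal_mul (by positivity)]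
  obtain ⟨c, hc0, hc4, hkey⟩ : ∃ c : ℝ, 0 < c ∧ c ≤ 1/4 ∧
      (R.card : ℝ) * (4 * c * 2^N) ≤ vt/3 := by
    refine ⟨min (1/4 : ℝ) (vt / (12 * ((R.card:ℝ)+1) * 2^N)), lt_min (by norm_num)
      (by positivity), min_le_left _ _, ?_⟩
    have h : min (1/4 : ℝ) (vt / (12 * ((R.card:ℝ)+1) * 2^N)) ≤
        vt / (12 * ((R.card:ℝ)+1) * 2^N) := min_le_right _ _
    rw [le_div_iff₀ (by norm_num : (0:ℝ) < 3)]
    have h2 : (12 * ((R.card:ℝ)+1) * 2^N) * min (1/4 : ℝ) (vt / (12 * ((R.card:ℝ)+1) * 2^N))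
        ≤ vt := by
      rw [mul_comm]
      calc _ ≤ (vt / (12 * ((R.card:ℝ)+1) * 2^N)) * (12 * ((R.card:ℝ)+1) * 2^N) :=
            mul_le_mul_of_nonneg_right h (by positivity)
        _ = vt := by field_simp
    have h3 : (0:ℝ) ≤ min (1/4 : ℝ) (vt / (12 * ((R.card:ℝ)+1) * 2^N)) :=
      le_min (by norm_num) (by positivity)
    nlinarith [mul_le_mul_of_nonneg_left h2 (Nat.cast_nonneg R.card : (0:ℝ) ≤ R.card),
      mul_nonneg h3 (by positivity : (0:ℝ) ≤ (2:ℝ)^N)]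
  -- nonnegativity and continuity of w
  have hwnn : ∀ y, 0 ≤ w y := fun y => by
    rw [hw]; exact Finset.prod_nonneg fun α _ => Real.rpow_nonneg (abs_nonneg _) _
  have hwc : Continuous w := by
    have hfun : w = fun y => ∏ α ∈ R, |⟪α, y⟫| ^ (k α) := funext hw
    rw [hfun]
    exact continuous_finset_prod R fun α hα =>
      (Real.continuous_rpow_const (hk α hα)).comp ((continuous_const.inner continuous_id).abs)
  -- the constants
  obtain ⟨A, hA0, hAeq⟩ : ∃ A : ℝ, 0 < A ∧ A = (vt/2) * ∏ α ∈ R, c ^ (k α) :=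
    ⟨_, mul_pos (by positivity) (Finset.prod_pos fun α _ => Real.rpow_pos_of_pos hc0 _), rfl⟩
  obtain ⟨B, hB0, hBeq⟩ : ∃ B : ℝ, 0 < B ∧ B = vt * ∏ α ∈ R, (Real.sqrt 2) ^ (k α) :=
    ⟨_, mul_pos hvt0 (Finset.prod_pos fun α _ => Real.rpow_pos_of_pos hs0 _), rfl⟩
  refine ⟨max A⁻¹ B, lt_of_lt_of_le (inv_pos.2 hA0) (le_max_left _ _), ?_⟩
  intro x r hr
  have hCinv : (max A⁻¹ B)⁻¹ ≤ A := by
    calc (max A⁻¹ B)⁻¹ ≤ (A⁻¹)⁻¹ := inv_anti₀ (inv_pos.2 hA0) (le_max_left _ _)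
      _ = A := inv_inv A
  have hCB : B ≤ max A⁻¹ B := le_max_right _ _
  have hIntcb : IntegrableOn w (closedBall x r) :=
    hwc.continuousOn.integrableOn_compact (isCompact_closedBall x r)
  have hIntb : IntegrableOn w (ball x r) := hIntcb.mono_set ball_subset_closedBall
  have hprodnn : (0:ℝ) ≤ ∏ α ∈ R, (|⟪x, α⟫| + r) ^ (k α) :=
    Finset.prod_nonneg fun α _ => Real.rpow_nonneg (by positivity) _
  constructor
  · -- LOWER BOUND
    set G : Set (EuclideanSpace ℝ (Fin N)) :=
      ball x r ∩ ⋂ α ∈ R, {y | c * (|⟪x, α⟫| + r) ≤ |⟪α, y⟫|} with hG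
    have hGmeas : MeasurableSet G := by
      apply measurableSet_ball.inter
      apply MeasurableSet.biInter (Set.finite_mem_finset R).countable
      intro α _
      exact measurableSet_le measurable_const
        ((continuous_const.inner continuous_id).abs).measurable
    have hbad : ∀ α ∈ R, volume {y | y ∈ ball x r ∧ |⟪α, y⟫| < c * (|⟪x, α⟫| + r)}
        ≤ ENNReal.ofReal (4*c*2^N*(r^N)) := by
      intro α hα
      have hN : 0 < N := by
        rcases Nat.eq_zero_or_pos N with h | h
        · exact absurd (by subst h; exact Subsingleton.elim α 0) (hR0 α hα)
        · exact h
      have hnα : ‖α‖ = Real.sqrt 2 := hRnorm α hα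
      have hxc : |⟪x, α⟫| = |⟪α, x⟫| := by rw [real_inner_comm]
      by_cases hcase : 2 * Real.sqrt 2 * r ≤ |⟪α, x⟫|
      · have hempty : {y | y ∈ ball x r ∧ |⟪α, y⟫| < c * (|⟪x, α⟫| + r)} = ∅ := by
          ext y
          simp only [Set.mem_setOf_eq, Set.mem_empty_iff_false, iff_false, not_and, not_lt]
          intro hy1
          have hxy : ‖x - y‖ ≤ r := by
            have h := mem_ball.1 hy1
            rw [dist_eq_norm] at h
            rw [← neg_sub y x, norm_neg]
            exact h.le
          have h5 : |⟪α, x⟫| ≤ |⟪α, y⟫| + Real.sqrt 2 * r := by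
            have e1 : ⟪α, x⟫ = ⟪α, y⟫ + ⟪α, x - y⟫ := by rw [inner_sub_right]; ring
            have e2 : |⟪α, x - y⟫| ≤ Real.sqrt 2 * r := by
              calc |⟪α, x - y⟫| ≤ ‖α‖ * ‖x - y‖ := abs_real_inner_le_norm α (x - y)
                _ ≤ Real.sqrt 2 * r := by
                    rw [hnα]; exact mul_le_mul_of_nonneg_left hxy hs0.le
            calc |⟪α, x⟫| = |⟪α, y⟫ + ⟪α, x - y⟫| := by rw [e1]
              _ ≤ |⟪α, y⟫| + |⟪α, x - y⟫| := abs_add_le _ _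
              _ ≤ |⟪α, y⟫| + Real.sqrt 2 * r := by linarith
          rw [hxc]
          nlinarith [mul_le_mul_of_nonneg_right hc4
            (by positivity : (0:ℝ) ≤ |⟪α, x⟫| + r), hr.le, hs1, abs_nonneg ⟪α, y⟫]
        rw [hempty]
        simp only [measure_empty]
        exact zero_le
      · push_neg at hcase
        have hne : ‖(Real.sqrt 2)⁻¹ • α‖ = 1 := by
          rw [norm_smul, hnα, norm_inv, Real.norm_eq_abs, abs_of_pos hs0,
            inv_mul_cancel₀ hs0.ne']
        have hsub : {y | y ∈ ball x r ∧ |⟪α, y⟫| < c * (|⟪x, α⟫| + r)} ⊆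
            {y | y ∈ ball x r ∧ |⟪(Real.sqrt 2)⁻¹ • α, y⟫| < 4*c*r} := by
          rintro y ⟨hy1, hy2⟩
          refine ⟨hy1, ?_⟩
          have hey : ⟪(Real.sqrt 2)⁻¹ • α, y⟫ = (Real.sqrt 2)⁻¹ * ⟪α, y⟫ :=
            real_inner_smul_left α y _
          rw [hey, abs_mul, abs_of_pos (inv_pos.2 hs0)]
          have hinv1 : (Real.sqrt 2)⁻¹ ≤ 1 := by
            rw [inv_le_one_iff₀]; right; exact hs1
          rw [hxc] at hy2
          nlinarith [mul_le_mul_of_nonneg_right hinv1 (abs_nonneg ⟪α, y⟫),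
            mul_lt_mul_of_pos_left (show |⟪α, x⟫| + r < 2 * Real.sqrt 2 * r + r by linarith)
              hc0, hc0.le, hr.le, hs2, abs_nonneg ⟪α, y⟫]
        calc volume {y | y ∈ ball x r ∧ |⟪α, y⟫| < c * (|⟪x, α⟫| + r)}
            ≤ volume {y | y ∈ ball x r ∧ |⟪(Real.sqrt 2)⁻¹ • α, y⟫| < 4*c*r} :=
              measure_mono hsub
          _ ≤ ENNReal.ofReal (2*(4*c*r)) * ENNReal.ofReal (2*r) ^ (N-1) :=
              slab_vol _ hne x r (4*c*r)
          _ ≤ ENNReal.ofReal (4*c*2^N*(r^N)) := by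
              rw [← ENNReal.ofReal_pow (by positivity), ← ENNReal.ofReal_mul (by positivity)]
              apply ENNReal.ofReal_le_ofReal
              apply le_of_eq
              have hN1 : N - 1 + 1 = N := by omega
              have hrN : r ^ N = r ^ (N-1) * r := by rw [← pow_succ, hN1]
              have h2N : (2:ℝ) ^ N = 2 ^ (N-1) * 2 := by rw [← pow_succ, hN1]
              rw [mul_pow, hrN, h2N]; ring
    have hcover : ball x r ⊆ G ∪ ⋃ α ∈ R,
        {y | y ∈ ball x r ∧ |⟪α, y⟫| < c * (|⟪x, α⟫| + r)} := by
      intro y hy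
      by_cases hgood : ∀ α ∈ R, c * (|⟪x, α⟫| + r) ≤ |⟪α, y⟫|
      · exact Or.inl ⟨hy, Set.mem_biInter fun α hα => hgood α hα⟩
      · push_neg at hgood
        obtain ⟨α, hα, hlt⟩ := hgood
        exact Or.inr (Set.mem_biUnion hα ⟨hy, hlt⟩)
    have hvolG : ENNReal.ofReal (r^N * (vt/2)) ≤ volume G := by
      have h1 : volume (ball x r) ≤ volume G + ∑ α ∈ R,
          volume {y | y ∈ ball x r ∧ |⟪α, y⟫| < c * (|⟪x, α⟫| + r)} := by
        calc volume (ball x r)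
            ≤ volume (G ∪ ⋃ α ∈ R, {y | y ∈ ball x r ∧ |⟪α, y⟫| < c * (|⟪x, α⟫| + r)}) :=
              measure_mono hcover
          _ ≤ volume G + volume (⋃ α ∈ R,
              {y | y ∈ ball x r ∧ |⟪α, y⟫| < c * (|⟪x, α⟫| + r)}) := measure_union_le _ _
          _ ≤ volume G + ∑ α ∈ R,
              volume {y | y ∈ ball x r ∧ |⟪α, y⟫| < c * (|⟪x, α⟫| + r)} :=
              add_le_add (le_refl _) (measure_biUnion_finset_le _ _)
      have h2 : ∑ α ∈ R, volume {y | y ∈ ball x r ∧ |⟪α, y⟫| < c * (|⟪x, α⟫| + r)}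
          ≤ ENNReal.ofReal (r^N * (vt/3)) := by
        calc ∑ α ∈ R, volume {y | y ∈ ball x r ∧ |⟪α, y⟫| < c * (|⟪x, α⟫| + r)}
            ≤ ∑ _α ∈ R, ENNReal.ofReal (4*c*2^N*(r^N)) := Finset.sum_le_sum hbad
          _ = (R.card : ℝ≥0∞) * ENNReal.ofReal (4*c*2^N*(r^N)) := by
              rw [Finset.sum_const, nsmul_eq_mul]
          _ = ENNReal.ofReal ((R.card : ℝ) * (4*c*2^N*(r^N))) := by
              rw [ENNReal.ofReal_mul (Nat.cast_nonneg _), ENNReal.ofReal_natCast]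
          _ ≤ ENNReal.ofReal (r^N * (vt/3)) := by
              apply ENNReal.ofReal_le_ofReal
              nlinarith [mul_le_mul_of_nonneg_right hkey (pow_nonneg hr.le N)]
      have h4 : ENNReal.ofReal (r^N * vt) ≤ volume G + ENNReal.ofReal (r^N * (vt/3)) := by
        rw [← hvolball x r hr]
        exact h1.trans (add_le_add (le_refl _) h2)
      have h5 : ENNReal.ofReal (r^N * vt) - ENNReal.ofReal (r^N * (vt/3)) ≤ volume G :=
        tsub_le_iff_right.2 h4
      calc ENNReal.ofReal (r^N * (vt/2))
          ≤ ENNReal.ofReal (r^N * vt - r^N * (vt/3)) := by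
            apply ENNReal.ofReal_le_ofReal
            nlinarith [pow_nonneg hr.le N, hvt0.le]
        _ = ENNReal.ofReal (r^N * vt) - ENNReal.ofReal (r^N * (vt/3)) :=
            ENNReal.ofReal_sub _ (by positivity)
        _ ≤ volume G := h5
    have hGfin : volume G ≠ ⊤ :=
      (lt_of_le_of_lt (measure_mono Set.inter_subset_left) measure_ball_lt_top).ne
    have hGtoReal : r^N * (vt/2) ≤ (volume G).toReal :=
      (ENNReal.ofReal_le_iff_le_toReal hGfin).1 hvolG
    have hlowpt : ∀ y ∈ G,
        (∏ α ∈ R, c ^ (k α)) * (∏ α ∈ R, (|⟪x, α⟫| + r) ^ (k α)) ≤ w y := by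
      intro y hy
      rw [hw, ← Finset.prod_mul_distrib]
      apply Finset.prod_le_prod
      · intro α _
        exact mul_nonneg (Real.rpow_nonneg hc0.le _) (Real.rpow_nonneg (by positivity) _)
      · intro α hα
        rw [← Real.mul_rpow hc0.le (by positivity)]
        refine Real.rpow_le_rpow (by positivity) ?_ (hk α hα)
        exact Set.mem_iInter₂.1 hy.2 α hα
    have hIntG : IntegrableOn w G := hIntb.mono_set Set.inter_subset_left
    have hstep1 : (∏ α ∈ R, c ^ (k α)) * (∏ α ∈ R, (|⟪x, α⟫| + r) ^ (k α))
        * (volume G).toReal ≤ ∫ y in G, w y :=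
      setIntegral_ge_of_const_le_real hGmeas hGfin hlowpt hIntG
    have hstep2 : (∫ y in G, w y) ≤ ∫ y in ball x r, w y :=
      setIntegral_mono_set hIntb (Filter.Eventually.of_forall hwnn)
        (HasSubset.Subset.eventuallyLE Set.inter_subset_left)
    have hKcnn : (0:ℝ) ≤ ∏ α ∈ R, c ^ (k α) :=
      Finset.prod_nonneg fun α _ => Real.rpow_nonneg hc0.le _
    calc (max A⁻¹ B)⁻¹ * (r ^ N * ∏ α ∈ R, (|⟪x, α⟫| + r) ^ (k α))
        ≤ A * (r ^ N * ∏ α ∈ R, (|⟪x, α⟫| + r) ^ (k α)) :=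
          mul_le_mul_of_nonneg_right hCinv
            (mul_nonneg (pow_nonneg hr.le N) hprodnn)
      _ = (∏ α ∈ R, c ^ (k α)) * (∏ α ∈ R, (|⟪x, α⟫| + r) ^ (k α)) * (r^N * (vt/2)) := by
          rw [hAeq]; ring
      _ ≤ (∏ α ∈ R, c ^ (k α)) * (∏ α ∈ R, (|⟪x, α⟫| + r) ^ (k α)) * (volume G).toReal :=
          mul_le_mul_of_nonneg_left hGtoReal (mul_nonneg hKcnn hprodnn)
      _ ≤ ∫ y in G, w y := hstep1
      _ ≤ ∫ y in ball x r, w y := hstep2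
  · -- UPPER BOUND
    have hup : ∀ y ∈ ball x r, w y ≤
        (∏ α ∈ R, (Real.sqrt 2) ^ (k α)) * (∏ α ∈ R, (|⟪x, α⟫| + r) ^ (k α)) := by
      intro y hy
      rw [hw, ← Finset.prod_mul_distrib]
      apply Finset.prod_le_prod
      · intro α _; exact Real.rpow_nonneg (abs_nonneg _) _
      · intro α hα
        rw [← Real.mul_rpow hs0.le (by positivity)]
        refine Real.rpow_le_rpow (abs_nonneg _) ?_ (hk α hα)
        have hxy : ‖y - x‖ ≤ r := by
          have h := mem_ball.1 hy
          rw [dist_eq_norm] at h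
          exact h.le
        have e1 : ⟪α, y⟫ = ⟪α, x⟫ + ⟪α, y - x⟫ := by rw [inner_sub_right]; ring
        have e2 : |⟪α, y - x⟫| ≤ Real.sqrt 2 * r := by
          calc |⟪α, y - x⟫| ≤ ‖α‖ * ‖y - x‖ := abs_real_inner_le_norm _ _
            _ ≤ Real.sqrt 2 * r := by
                rw [hRnorm α hα]; exact mul_le_mul_of_nonneg_left hxy hs0.le
        have hxc : |⟪α, x⟫| = |⟪x, α⟫| := by rw [real_inner_comm]
        calc |⟪α, y⟫| = |⟪α, x⟫ + ⟪α, y - x⟫| := by rw [e1]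
          _ ≤ |⟪α, x⟫| + |⟪α, y - x⟫| := abs_add_le _ _
          _ ≤ |⟪x, α⟫| + Real.sqrt 2 * r := by rw [← hxc]; linarith
          _ ≤ Real.sqrt 2 * (|⟪x, α⟫| + r) := by nlinarith [abs_nonneg ⟪x, α⟫, hs1, hr.le]
    have hmono : (∫ y in ball x r, w y) ≤ ∫ _y in ball x r,
        ((∏ α ∈ R, (Real.sqrt 2) ^ (k α)) * (∏ α ∈ R, (|⟪x, α⟫| + r) ^ (k α))) :=
      setIntegral_mono_on hIntb
        (integrableOn_const measure_ball_lt_top.ne) measurableSet_ball hup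
    have hKsnn : (0:ℝ) ≤ ∏ α ∈ R, (Real.sqrt 2) ^ (k α) :=
      Finset.prod_nonneg fun α _ => Real.rpow_nonneg hs0.le _
    calc (∫ y in ball x r, w y)
        ≤ (volume (ball x r)).toReal •
            ((∏ α ∈ R, (Real.sqrt 2) ^ (k α)) * (∏ α ∈ R, (|⟪x, α⟫| + r) ^ (k α))) := by
          exact hmono.trans_eq (setIntegral_const _)
      _ = (r^N * vt) * ((∏ α ∈ R, (Real.sqrt 2) ^ (k α)) *
            (∏ α ∈ R, (|⟪x, α⟫| + r) ^ (k α))) := by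
          rw [hvolball x r hr, ENNReal.toReal_ofReal (by positivity), smul_eq_mul]
      _ = B * (r ^ N * ∏ α ∈ R, (|⟪x, α⟫| + r) ^ (k α)) := by rw [hBeq]; ring
      _ ≤ (max A⁻¹ B) * (r ^ N * ∏ α ∈ R, (|⟪x, α⟫| + r) ^ (k α)) :=
          mul_le_mul_of_nonneg_right hCB (mul_nonneg (pow_nonneg hr.le N) hprodnn)
end

section
/- There is a constant C > 0 such that for all x ∈ ℝ^N and all radii 0 < r₁ < r₂, C^{-1}(r₂/r₁)^N ≤ w(B(x,r₂))/w(B(x,r₁)) ≤ C (r₂/r₁)^{N+2γ}, where γ = (1/2)∑_{α∈R} k(α). -/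
open MeasureTheory Metric Finset
open scoped RealInnerProductSpace

set_option maxHeartbeats 1600000 in
/-- Volume growth estimates for the Dunkl measure of balls. -/
theorem dunkl_measure_growth (N : ℕ) (R : Finset (EuclideanSpace ℝ (Fin N)))
    (hR0 : ∀ α ∈ R, α ≠ 0) (hRnorm : ∀ α ∈ R, ‖α‖ = Real.sqrt 2)
    (hRrefl : ∀ α ∈ R, ∀ β ∈ R, β - ⟪β, α⟫ • α ∈ R)
    (k : EuclideanSpace ℝ (Fin N) → ℝ) (hk : ∀ α ∈ R, 0 ≤ k α)
    (hkinv : ∀ α ∈ R, ∀ β ∈ R, k (β - ⟪β, α⟫ • α) = k β)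
    (w : EuclideanSpace ℝ (Fin N) → ℝ)
    (hw : ∀ x, w x = ∏ α ∈ R, |⟪α, x⟫| ^ (k α))
    (γ : ℝ) (hγ : γ = (1 / 2) * ∑ α ∈ R, k α) :
    ∃ C : ℝ, 0 < C ∧ ∀ (x : EuclideanSpace ℝ (Fin N)) (r₁ r₂ : ℝ), 0 < r₁ → r₁ < r₂ →
      C⁻¹ * (r₂ / r₁) ^ N ≤ (∫ y in ball x r₂, w y) / (∫ y in ball x r₁, w y) ∧
      (∫ y in ball x r₂, w y) / (∫ y in ball x r₁, w y) ≤
        C * (r₂ / r₁) ^ ((N : ℝ) + 2 * γ) := by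
  classical
  -- trivial case N = 0
  rcases Nat.eq_zero_or_pos N with hN | hN
  · subst hN
    have hRempty : R = ∅ := by
      rw [Finset.eq_empty_iff_forall_notMem]
      intro α hα
      exact hR0 α hα (Subsingleton.elim _ _)
    have hγ0 : γ = 0 := by rw [hγ, hRempty]; simp
    have hvol : volume (Set.univ : Set (EuclideanSpace ℝ (Fin 0))) = 1 := by
      have h := (EuclideanSpace.volume_preserving_symm_measurableEquiv_toLp
        (Fin 0)).measure_preimage MeasurableSet.univ.nullMeasurableSet
      rw [Set.preimage_univ] at h
      rw [h, volume_pi, Measure.pi_univ]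
      simp
    have hint : ∀ (x : EuclideanSpace ℝ (Fin 0)) (r : ℝ), 0 < r →
        (∫ y in ball x r, w y) = 1 := by
      intro x r hr
      have hballu : ball x r = Set.univ := by
        ext y
        simp [mem_ball, Subsingleton.elim y x, hr]
      simp only [hw, hRempty, Finset.prod_empty, hballu]
      rw [setIntegral_const, measureReal_def, hvol]
      simp
    refine ⟨1, one_pos, ?_⟩
    intro x r₁ r₂ hr₁ h12
    rw [hint x r₁ hr₁, hint x r₂ (hr₁.trans h12)]
    have hq1 : (1:ℝ) ≤ r₂ / r₁ := (one_le_div hr₁).2 h12.le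
    constructor
    · simp
    · rw [hγ0]
      norm_num
  -- main case
  haveI : Nontrivial (EuclideanSpace ℝ (Fin N)) :=
    Module.nontrivial_of_finrank_pos (R := ℝ) (by rw [finrank_euclideanSpace_fin]; exact hN)
  have sqrt2_pos : (0:ℝ) < Real.sqrt 2 := Real.sqrt_pos.2 (by norm_num)
  have sqrt2_ge_one : (1:ℝ) ≤ Real.sqrt 2 := by
    nlinarith [Real.sq_sqrt (by norm_num : (0:ℝ) ≤ 2), Real.sqrt_nonneg 2]
  have sqrt2_le : Real.sqrt 2 ≤ 1.5 := by
    nlinarith [Real.sq_sqrt (by norm_num : (0:ℝ) ≤ 2), Real.sqrt_nonneg 2]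
  have hw_nonneg : ∀ y, 0 ≤ w y := fun y => by
    rw [hw]; exact Finset.prod_nonneg fun α hα => Real.rpow_nonneg (abs_nonneg _) _
  have hw_cont : Continuous w := by
    have hwe : w = fun x => ∏ α ∈ R, |⟪α, x⟫| ^ (k α) := funext hw
    rw [hwe]
    apply continuous_finset_prod
    intro α hα
    exact (continuous_abs.comp (Continuous.inner continuous_const continuous_id)).rpow_const
      (fun x => Or.inr (hk α hα))
  have hw_int : ∀ (x : EuclideanSpace ℝ (Fin N)) (r : ℝ), IntegrableOn w (ball x r) volume :=
    fun x r => ((hw_cont.continuousOn).integrableOn_compact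
      (isCompact_closedBall x r)).mono_set ball_subset_closedBall
  set vb : ℝ := (volume (ball (0 : EuclideanSpace ℝ (Fin N)) 1)).toReal with hvb_def
  have hvb_pos : 0 < vb :=
    ENNReal.toReal_pos (measure_ball_pos _ _ one_pos).ne' measure_ball_lt_top.ne
  have hballvol : ∀ (z : EuclideanSpace ℝ (Fin N)) (ρ : ℝ), 0 < ρ →
      (volume (ball z ρ)).toReal = ρ ^ N * vb := by
    intro z ρ hρ
    rw [hvb_def, Measure.addHaar_ball volume z hρ.le, finrank_euclideanSpace_fin,
      ENNReal.toReal_mul, ENNReal.toReal_ofReal (pow_nonneg hρ.le _)]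
  have hinner : ∀ α ∈ R, ∀ (cc y : EuclideanSpace ℝ (Fin N)),
      |⟪α, y⟫| ≤ |⟪α, cc⟫| + Real.sqrt 2 * dist y cc := by
    intro α hα cc y
    have h1 : |⟪α, y⟫ - ⟪α, cc⟫| ≤ ‖α‖ * ‖y - cc‖ := by
      rw [← inner_sub_right]
      exact abs_real_inner_le_norm α (y - cc)
    rw [hRnorm α hα] at h1
    have h2 : |⟪α, y⟫| ≤ |⟪α, cc⟫| + |⟪α, y⟫ - ⟪α, cc⟫| := by
      calc |⟪α, y⟫| = |⟪α, cc⟫ + (⟪α, y⟫ - ⟪α, cc⟫)| := by ring_nf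
        _ ≤ |⟪α, cc⟫| + |⟪α, y⟫ - ⟪α, cc⟫| := abs_add_le _ _
    rw [dist_eq_norm]
    linarith
  set P : EuclideanSpace ℝ (Fin N) → ℝ → ℝ :=
    fun x r => ∏ α ∈ R, (|⟪α, x⟫| + r) ^ (k α) with hP_def
  have hP_pos : ∀ x r, 0 < r → 0 < P x r := by
    intro x r hr
    exact Finset.prod_pos fun α hα => Real.rpow_pos_of_pos (by positivity) _
  set K₂ : ℝ := ∏ α ∈ R, Real.sqrt 2 ^ (k α) with hK₂_def
  have hK₂_pos : 0 < K₂ := Finset.prod_pos fun α hα => Real.rpow_pos_of_pos sqrt2_pos _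
  -- upper bound for the integral
  have hupper : ∀ (x : EuclideanSpace ℝ (Fin N)) (r : ℝ), 0 < r →
      (∫ y in ball x r, w y) ≤ r ^ N * vb * (K₂ * P x r) := by
    intro x r hr
    have hbound : ∀ y ∈ ball x r, w y ≤ K₂ * P x r := by
      intro y hy
      rw [hw, hK₂_def, hP_def, ← Finset.prod_mul_distrib]
      refine Finset.prod_le_prod (fun α hα => Real.rpow_nonneg (abs_nonneg _) _) ?_
      intro α hα
      have hd : dist y x < r := mem_ball.1 hy
      have h0 := hinner α hα x y
      have h1 : |⟪α, y⟫| ≤ Real.sqrt 2 * (|⟪α, x⟫| + r) := by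
        nlinarith [abs_nonneg (⟪α, x⟫ : ℝ), dist_nonneg (x := y) (y := x)]
      calc |⟪α, y⟫| ^ (k α) ≤ (Real.sqrt 2 * (|⟪α, x⟫| + r)) ^ (k α) :=
            Real.rpow_le_rpow (abs_nonneg _) h1 (hk α hα)
        _ = Real.sqrt 2 ^ (k α) * (|⟪α, x⟫| + r) ^ (k α) :=
            Real.mul_rpow sqrt2_pos.le (by positivity)
    calc (∫ y in ball x r, w y) ≤ ∫ _ in ball x r, (K₂ * P x r) :=
          setIntegral_mono_on (hw_int x r)
            (integrableOn_const measure_ball_lt_top.ne) measurableSet_ball hbound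
      _ = (volume (ball x r)).toReal * (K₂ * P x r) := by
          rw [setIntegral_const, smul_eq_mul, measureReal_def]
      _ = r ^ N * vb * (K₂ * P x r) := by rw [hballvol x r hr]
  -- good points far from the hyperplanes
  have hgood : ∃ δ : ℝ, 0 < δ ∧ δ ≤ 1 ∧ ∀ (x : EuclideanSpace ℝ (Fin N)) (r : ℝ), 0 < r →
      ∃ z, dist z x < r / 2 ∧ ∀ α ∈ R, δ * r ≤ |⟪α, z⟫| := by
    rcases R.eq_empty_or_nonempty with hRe | hRne
    · refine ⟨1, one_pos, le_refl 1, fun x r hr => ⟨x, by simpa using by linarith, by simp [hRe]⟩⟩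
    · have hUnull : volume (⋃ α ∈ R, ((LinearMap.ker (innerSL ℝ α).toLinearMap : Submodule ℝ (EuclideanSpace ℝ (Fin N))) : Set (EuclideanSpace ℝ (Fin N)))) = 0 := by
        refine (measure_biUnion_null_iff R.countable_toSet).2 ?_
        intro α hα
        apply Measure.addHaar_submodule
        intro htop
        apply hR0 α hα
        have h : α ∈ LinearMap.ker (innerSL ℝ α).toLinearMap := by rw [htop]; trivial
        have h2 : ⟪α, α⟫ = 0 := by simpa using h
        exact inner_self_eq_zero.1 h2
      obtain ⟨v, hv1, hv2⟩ : ∃ v ∈ ball (0 : EuclideanSpace ℝ (Fin N)) 1,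
          v ∉ ⋃ α ∈ R, ((LinearMap.ker (innerSL ℝ α).toLinearMap : Submodule ℝ (EuclideanSpace ℝ (Fin N))) : Set (EuclideanSpace ℝ (Fin N))) := by
        by_contra h
        push_neg at h
        have hsub : ball (0 : EuclideanSpace ℝ (Fin N)) 1 ⊆ _ := h
        have := (measure_mono hsub).trans_eq hUnull
        exact absurd (le_antisymm this zero_le) (measure_ball_pos volume _ one_pos).ne'
      have hvinner : ∀ α ∈ R, ⟪α, v⟫ ≠ 0 := by
        intro α hα h0
        exact hv2 (Set.mem_biUnion hα (by simpa using h0))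
      set c := R.inf' hRne (fun α => |⟪α, v⟫|) with hc
      have hcpos : 0 < c := by
        rw [Finset.lt_inf'_iff]
        exact fun α hα => abs_pos.2 (hvinner α hα)
      have hcle : ∀ α ∈ R, c ≤ |⟪α, v⟫| := fun α hα => Finset.inf'_le _ hα
      set m := R.card with hm
      refine ⟨min 1 (c / (8 * (m + 1))), lt_min one_pos (by positivity), min_le_left _ _, ?_⟩
      intro x r hr
      set δ := min 1 (c / (8 * (m + 1))) with hδdef
      have hδpos : 0 < δ := lt_min one_pos (by positivity)
      have hδle : δ ≤ c / (8 * (m + 1)) := min_le_right _ _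
      have hbadcover : ∀ α ∈ R, {t : ℝ | |⟪α, x⟫ + t * ⟪α, v⟫| < δ * r} ⊆
          ball (-(⟪α, x⟫ / ⟪α, v⟫)) (δ * r / c) := by
        intro α hα t ht
        simp only [Set.mem_setOf_eq] at ht
        have hαv := hvinner α hα
        have hαvc := hcle α hα
        rw [mem_ball, Real.dist_eq]
        have hBA : ⟪α, v⟫ * (⟪α, x⟫ / ⟪α, v⟫) = ⟪α, x⟫ := by
          rw [mul_comm]; exact div_mul_cancel₀ _ hαv
        have h1 : |⟪α, x⟫ + t * ⟪α, v⟫| = |⟪α, v⟫| * |t - -(⟪α, x⟫ / ⟪α, v⟫)| := by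
          rw [← abs_mul, sub_neg_eq_add, mul_add, hBA]
          ring_nf
        rw [h1] at ht
        rw [lt_div_iff₀ hcpos]
        calc |t - -(⟪α, x⟫ / ⟪α, v⟫)| * c ≤ |t - -(⟪α, x⟫ / ⟪α, v⟫)| * |⟪α, v⟫| :=
              mul_le_mul_of_nonneg_left hαvc (abs_nonneg _)
          _ < δ * r := by rw [mul_comm]; exact ht
      have hbadvol : volume (⋃ α ∈ R, {t : ℝ | |⟪α, x⟫ + t * ⟪α, v⟫| < δ * r}) ≤
          ENNReal.ofReal (m * (2 * (δ * r / c))) := by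
        calc volume (⋃ α ∈ R, {t : ℝ | |⟪α, x⟫ + t * ⟪α, v⟫| < δ * r})
            ≤ ∑ α ∈ R, volume {t : ℝ | |⟪α, x⟫ + t * ⟪α, v⟫| < δ * r} :=
              measure_biUnion_finset_le R _
          _ ≤ ∑ α ∈ R, ENNReal.ofReal (2 * (δ * r / c)) := by
              refine Finset.sum_le_sum fun α hα => ?_
              refine (measure_mono (hbadcover α hα)).trans ?_
              rw [Real.volume_ball]
          _ = ENNReal.ofReal (m * (2 * (δ * r / c))) := by
              rw [Finset.sum_const, hm, nsmul_eq_mul, ← ENNReal.ofReal_natCast m,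
                ← ENNReal.ofReal_mul (Nat.cast_nonneg m)]
      have hlt : ENNReal.ofReal (m * (2 * (δ * r / c))) < volume (Set.Ioc (0:ℝ) (r/2)) := by
        rw [Real.volume_Ioc, sub_zero]
        refine (ENNReal.ofReal_lt_ofReal_iff (by positivity)).2 ?_
        have h8 : δ * (8 * ((m : ℝ) + 1)) ≤ c := (le_div_iff₀ (by positivity)).1 hδle
        have heq : (m : ℝ) * (2 * (δ * r / c)) = 2 * m * δ * r / c := by ring
        have hle4 : (m : ℝ) * (2 * (δ * r / c)) ≤ r / 4 := by
          rw [heq, div_le_iff₀ hcpos]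
          nlinarith [mul_le_mul_of_nonneg_left h8 hr.le, hδpos.le, hr.le,
            Nat.cast_nonneg (α := ℝ) m]
        linarith
      have hnsub : ¬ (Set.Ioc (0:ℝ) (r/2) ⊆ ⋃ α ∈ R, {t : ℝ | |⟪α, x⟫ + t * ⟪α, v⟫| < δ * r}) := by
        intro hsub
        exact absurd (measure_mono hsub) (not_le.2 (lt_of_le_of_lt hbadvol hlt))
      obtain ⟨t, htIoc, htbad⟩ := Set.not_subset.1 hnsub
      refine ⟨x + t • v, ?_, ?_⟩
      · have hv : ‖v‖ < 1 := mem_ball_zero_iff.1 hv1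
        have ht0 : 0 < t := htIoc.1
        have ht2 : t ≤ r / 2 := htIoc.2
        have hd : dist (x + t • v) x = t * ‖v‖ := by
          rw [dist_eq_norm, add_sub_cancel_left, norm_smul, Real.norm_eq_abs, abs_of_pos ht0]
        rw [hd]
        nlinarith [norm_nonneg v]
      · intro α hα
        have hmem : t ∉ {s : ℝ | |⟪α, x⟫ + s * ⟪α, v⟫| < δ * r} := fun h =>
          htbad (Set.mem_biUnion hα h)
        have h2 : ⟪α, x + t • v⟫ = ⟪α, x⟫ + t * ⟪α, v⟫ := by
          rw [inner_add_right, real_inner_smul_right]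
        rw [h2]
        exact not_lt.1 (by simpa using hmem)
  obtain ⟨δ, hδ0, hδ1, hδ⟩ := hgood
  set K₁ : ℝ := ∏ α ∈ R, (δ / 8) ^ (k α) with hK₁_def
  have hK₁_pos : 0 < K₁ := Finset.prod_pos fun α hα => Real.rpow_pos_of_pos (by positivity) _
  -- lower bound for the integral
  have hlower : ∀ (x : EuclideanSpace ℝ (Fin N)) (r : ℝ), 0 < r →
      ((δ / 4) * r) ^ N * vb * (K₁ * P x r) ≤ ∫ y in ball x r, w y := by
    intro x r hr
    obtain ⟨z, hz, hzα⟩ := hδ x r hr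
    set ρ : ℝ := (δ / 4) * r with hρ_def
    have hρ_pos : 0 < ρ := by positivity
    have hsub : ball z ρ ⊆ ball x r := by
      intro y hy
      rw [mem_ball] at hy ⊢
      have htri : dist y x ≤ dist y z + dist z x := dist_triangle y z x
      have hρr : ρ ≤ r / 4 := by
        rw [hρ_def]
        nlinarith
      linarith
    have hbound : ∀ y ∈ ball z ρ, K₁ * P x r ≤ w y := by
      intro y hy
      rw [hw, hK₁_def, hP_def, ← Finset.prod_mul_distrib]
      refine Finset.prod_le_prod (fun α hα => by positivity) ?_
      intro α hα
      have hkey : (δ / 8) * (|⟪α, x⟫| + r) ≤ |⟪α, y⟫| := by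
        have hyz : dist y z < ρ := mem_ball.1 hy
        have hyx : dist y x < r := mem_ball.1 (hsub hy)
        have hz1 := hzα α hα
        have h1 := hinner α hα y z   -- |⟪α,z⟫| ≤ |⟪α,y⟫| + √2 dist z y
        have h2 := hinner α hα y x   -- |⟪α,x⟫| ≤ |⟪α,y⟫| + √2 dist x y
        rw [dist_comm z y] at h1
        rw [dist_comm x y] at h2
        by_cases h3 : |⟪α, x⟫| ≤ 3 * r
        · -- small case : |⟪α,y⟫| ≥ δr − √2·ρ ≥ δ r/2 ≥ (δ/8)(|a|+r)
          nlinarith [dist_nonneg (x := y) (y := z)]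
        · -- large case
          push_neg at h3
          nlinarith [dist_nonneg (x := y) (y := x)]
      calc (δ / 8) ^ (k α) * (|⟪α, x⟫| + r) ^ (k α)
          = ((δ / 8) * (|⟪α, x⟫| + r)) ^ (k α) :=
            (Real.mul_rpow (by positivity) (by positivity)).symm
        _ ≤ |⟪α, y⟫| ^ (k α) :=
            Real.rpow_le_rpow (by positivity) hkey (hk α hα)
    calc ρ ^ N * vb * (K₁ * P x r) = (volume (ball z ρ)).toReal * (K₁ * P x r) := by
          rw [hballvol z ρ hρ_pos]
      _ = ∫ _ in ball z ρ, (K₁ * P x r) := by rw [setIntegral_const, smul_eq_mul, measureReal_def]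
      _ ≤ ∫ y in ball z ρ, w y :=
          setIntegral_mono_on (integrableOn_const measure_ball_lt_top.ne)
            ((hw_int x r).mono_set hsub) measurableSet_ball hbound
      _ ≤ ∫ y in ball x r, w y :=
          setIntegral_mono_set (hw_int x r)
            (Filter.Eventually.of_forall hw_nonneg) (HasSubset.Subset.eventuallyLE hsub)
  -- monotonicity and ratio bound for P
  have hPmono : ∀ (x : EuclideanSpace ℝ (Fin N)) (r₁ r₂ : ℝ), 0 < r₁ → r₁ ≤ r₂ →
      P x r₁ ≤ P x r₂ := by
    intro x r₁ r₂ hr₁ h12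
    refine Finset.prod_le_prod (fun α hα => by positivity) ?_
    intro α hα
    exact Real.rpow_le_rpow (by positivity) (by linarith) (hk α hα)
  have hPratio : ∀ (x : EuclideanSpace ℝ (Fin N)) (r₁ r₂ : ℝ), 0 < r₁ → r₁ < r₂ →
      P x r₂ ≤ (r₂ / r₁) ^ (∑ α ∈ R, k α) * P x r₁ := by
    intro x r₁ r₂ hr₁ h12
    have hr₂ : 0 < r₂ := hr₁.trans h12
    have hq : 0 < r₂ / r₁ := div_pos (hr₁.trans h12) hr₁
    have hq1 : (1:ℝ) ≤ r₂ / r₁ := (one_le_div hr₁).2 h12.le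
    rw [Real.rpow_sum_of_pos hq, hP_def, ← Finset.prod_mul_distrib]
    refine Finset.prod_le_prod
      (fun α hα => Real.rpow_nonneg (add_nonneg (abs_nonneg _) hr₂.le) _) ?_
    intro α hα
    have hbase : |⟪α, x⟫| + r₂ ≤ (r₂ / r₁) * (|⟪α, x⟫| + r₁) := by
      have hrr : (r₂ / r₁) * r₁ = r₂ := div_mul_cancel₀ _ hr₁.ne'
      have habs : |⟪α, x⟫| ≤ (r₂ / r₁) * |⟪α, x⟫| :=
        le_mul_of_one_le_left (abs_nonneg _) hq1
      calc |⟪α, x⟫| + r₂ ≤ (r₂ / r₁) * |⟪α, x⟫| + (r₂ / r₁) * r₁ := by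
            rw [hrr]; linarith
        _ = (r₂ / r₁) * (|⟪α, x⟫| + r₁) := by ring
    calc (|⟪α, x⟫| + r₂) ^ (k α) ≤ ((r₂ / r₁) * (|⟪α, x⟫| + r₁)) ^ (k α) :=
          Real.rpow_le_rpow (add_nonneg (abs_nonneg _) hr₂.le) hbase (hk α hα)
      _ = (r₂ / r₁) ^ (k α) * (|⟪α, x⟫| + r₁) ^ (k α) :=
          Real.mul_rpow hq.le (by positivity)
  -- assemble
  have h2γ : 2 * γ = ∑ α ∈ R, k α := by rw [hγ]; ring
  refine ⟨K₂ / ((δ / 4) ^ N * K₁), by positivity, ?_⟩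
  intro x r₁ r₂ hr₁ h12
  have hr₂ : 0 < r₂ := hr₁.trans h12
  have hq : 0 < r₂ / r₁ := div_pos hr₂ hr₁
  have hU₁ := hupper x r₁ hr₁
  have hU₂ := hupper x r₂ hr₂
  have hL₁ := hlower x r₁ hr₁
  have hL₂ := hlower x r₂ hr₂
  have hP₁ := hP_pos x r₁ hr₁
  have hP₂ := hP_pos x r₂ hr₂
  have hV₁pos : 0 < ∫ y in ball x r₁, w y :=
    lt_of_lt_of_le (by positivity) hL₁
  have hV₂pos : 0 < ∫ y in ball x r₂, w y :=
    lt_of_lt_of_le (by positivity) hL₂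
  constructor
  · rw [le_div_iff₀ hV₁pos]
    calc (K₂ / ((δ / 4) ^ N * K₁))⁻¹ * (r₂ / r₁) ^ N * ∫ y in ball x r₁, w y
        ≤ (K₂ / ((δ / 4) ^ N * K₁))⁻¹ * (r₂ / r₁) ^ N * (r₁ ^ N * vb * (K₂ * P x r₁)) := by
          have hcoef : (0:ℝ) ≤ (K₂ / ((δ / 4) ^ N * K₁))⁻¹ * (r₂ / r₁) ^ N := by positivity
          exact mul_le_mul_of_nonneg_left hU₁ hcoef
      _ = ((δ / 4) * r₂) ^ N * vb * (K₁ * P x r₁) := by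
          rw [inv_div, div_pow, mul_pow]
          field_simp
          have h1 : r₁ ^ N * r₁⁻¹ ^ N = 1 := by rw [← mul_pow, mul_inv_cancel₀ hr₁.ne', one_pow]
          have h2 : (1 / 4 : ℝ) ^ N * 4 ^ N = 1 := by rw [← mul_pow]; norm_num
          linear_combination (δ ^ N * r₂ ^ N) * h1 - (δ ^ N * r₂ ^ N) * h2
      _ ≤ ((δ / 4) * r₂) ^ N * vb * (K₁ * P x r₂) := by
          have := hPmono x r₁ r₂ hr₁ h12.le
          have hcoef : (0:ℝ) ≤ ((δ / 4) * r₂) ^ N * vb * K₁ := by positivity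
          nlinarith [this]
      _ ≤ ∫ y in ball x r₂, w y := hL₂
  · rw [div_le_iff₀ hV₁pos]
    have hexp : (r₂ / r₁) ^ ((N : ℝ) + 2 * γ)
        = (r₂ / r₁) ^ N * (r₂ / r₁) ^ (∑ α ∈ R, k α) := by
      rw [Real.rpow_add hq, h2γ, Real.rpow_natCast]
    calc (∫ y in ball x r₂, w y) ≤ r₂ ^ N * vb * (K₂ * P x r₂) := hU₂
      _ ≤ r₂ ^ N * vb * (K₂ * ((r₂ / r₁) ^ (∑ α ∈ R, k α) * P x r₁)) := by
          have := hPratio x r₁ r₂ hr₁ h12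
          have hcoef : (0:ℝ) ≤ r₂ ^ N * vb * K₂ := by positivity
          nlinarith [this]
      _ = K₂ / ((δ / 4) ^ N * K₁) * (r₂ / r₁) ^ ((N : ℝ) + 2 * γ)
            * (((δ / 4) * r₁) ^ N * vb * (K₁ * P x r₁)) := by
          rw [hexp, div_pow, mul_pow]
          field_simp
          have h1 : r₁ ^ N * r₁⁻¹ ^ N = 1 := by rw [← mul_pow, mul_inv_cancel₀ hr₁.ne', one_pow]
          have h2 : (1 / 4 : ℝ) ^ N * 4 ^ N = 1 := by rw [← mul_pow]; norm_num
          linear_combination (-(r₂ ^ N * δ ^ N) * ((1 / 4 : ℝ) ^ N * 4 ^ N)) * h1 - (r₂ ^ N * δ ^ N) * h2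
      _ ≤ K₂ / ((δ / 4) ^ N * K₁) * (r₂ / r₁) ^ ((N : ℝ) + 2 * γ)
            * ∫ y in ball x r₁, w y := by
          have hcoef : (0:ℝ) ≤ K₂ / ((δ / 4) ^ N * K₁) * (r₂ / r₁) ^ ((N : ℝ) + 2 * γ) := by
            positivity
          exact mul_le_mul_of_nonneg_left hL₁ hcoef
end

section
/- Suppose Φ : ℝ^N → ℝ is a continuous radial function supported in the unit ball B(0,1), and let Φ_t(x) = t^{-𝐍}Φ(x/t). Assume the Rösler formula τ_x Φ_t(−y) = ∫ Φ̃_t(A(x,y,η)) dμ_x(η) for the Dunkl translation of radial functions, and the heat kernel bound h_t(x,y) ≤ C V(x,y,√t)^{-1}(1+‖x−y‖/√t)^{-2}exp(−c d(x,y)²/t). Then there is C' = C'(Φ) > 0 such that |τ_x Φ_t(−y)| ≤ C' V(x,y,t)^{-1} (1 + ‖x−y‖/t)^{-2} for all x,y and t > 0, and moreover τ_x Φ_t(−y) = 0 whenever d(x,y) > t. -/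
open MeasureTheory Metric
open scoped RealInnerProductSpace

set_option maxHeartbeats 1000000

/-- Bound for Dunkl translations of continuous radial functions supported in the unit
ball: `|τ_x Φ_t(-y)| ≤ C' V(x,y,t)⁻¹ (1 + ‖x-y‖/t)⁻²`, and the translation vanishes
when `d(x,y) > t`. -/
theorem dunkl_translation_radial_bound (N : ℕ)
    (G : Subgroup (EuclideanSpace ℝ (Fin N) ≃ₗᵢ[ℝ] EuclideanSpace ℝ (Fin N)))
    (hGfin : Finite G)
    (Nb ck : ℝ) (hck : 0 < ck)
    (φ : ℝ → ℝ) (hφcont : Continuous φ) (hφsupp : ∀ s : ℝ, 1 ≤ s → φ s = 0)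
    (μx : EuclideanSpace ℝ (Fin N) → Measure (EuclideanSpace ℝ (Fin N)))
    (hμx : ∀ x, IsProbabilityMeasure (μx x))
    (hμxsupp : ∀ x, μx x (convexHull ℝ (Set.range fun σ : G => σ.1 x))ᶜ = 0)
    (d : EuclideanSpace ℝ (Fin N) → EuclideanSpace ℝ (Fin N) → ℝ)
    (hd : ∀ x y, d x y = ⨅ σ : G, ‖σ.1 x - y‖)
    (wB : EuclideanSpace ℝ (Fin N) → ℝ → ℝ)
    (hwB : ∀ x r, 0 < r → 0 < wB x r)
    (τΦ : ℝ → EuclideanSpace ℝ (Fin N) → EuclideanSpace ℝ (Fin N) → ℝ)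
    (hτ : ∀ t x y, 0 < t → τΦ t x y =
      ∫ η, t ^ (-Nb) * φ (Real.sqrt (‖x‖ ^ 2 + ‖y‖ ^ 2 - 2 * ⟪y, η⟫) / t) ∂(μx x))
    (h : ℝ → EuclideanSpace ℝ (Fin N) → EuclideanSpace ℝ (Fin N) → ℝ)
    (hh : ∀ s x y, 0 < s → h s x y =
      ∫ η, ck⁻¹ * (2 * s) ^ (-(Nb / 2)) *
        Real.exp (-(‖x‖ ^ 2 + ‖y‖ ^ 2 - 2 * ⟪y, η⟫) / (4 * s)) ∂(μx x))
    (C c : ℝ) (hC : 0 < C) (hc : 0 < c)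
    (hheat : ∀ s x y, 0 < s → h s x y ≤
      C * (max (wB x (Real.sqrt s)) (wB y (Real.sqrt s)))⁻¹ *
        (1 + ‖x - y‖ / Real.sqrt s) ^ (-(2 : ℝ)) * Real.exp (-c * d x y ^ 2 / s)) :
    ∃ C' : ℝ, 0 < C' ∧ ∀ t x y, 0 < t →
      (|τΦ t x y| ≤ C' * (max (wB x t) (wB y t))⁻¹ * (1 + ‖x - y‖ / t) ^ (-(2 : ℝ))) ∧
      (d x y > t → τΦ t x y = 0) := by
  classical
  obtain ⟨M0, hM0⟩ := (isCompact_Icc (a := (0:ℝ)) (b := 1)).exists_bound_of_continuousOn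
    hφcont.continuousOn
  set M : ℝ := max M0 0 + 1 with hMdef
  have hMpos : (0:ℝ) < M := by positivity
  have hMb : ∀ u : ℝ, 0 ≤ u → u ≤ 1 → |φ u| ≤ M := by
    intro u h0 h1
    have := hM0 u ⟨h0, h1⟩
    rw [Real.norm_eq_abs] at this
    have : M0 ≤ M := by
      have := le_max_left M0 (0:ℝ); simp only [hMdef]; linarith
    calc |φ u| ≤ M0 := by simpa using hM0 u ⟨h0, h1⟩
      _ ≤ M := this
  set K : ℝ := M * Real.exp 4⁻¹ * ck * (2:ℝ) ^ (Nb/2) with hK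
  have hKpos : 0 < K := by positivity
  refine ⟨K * C, by positivity, fun t x y ht => ?_⟩
  haveI : Nonempty G := ⟨1⟩
  haveI := Fintype.ofFinite G
  haveI := hμx x
  -- distance facts
  have hd0 : 0 ≤ d x y := by
    rw [hd]; exact le_ciInf fun σ => norm_nonneg _
  have hdle : ∀ σ : G, d x y ≤ ‖σ.1 x - y‖ := by
    intro σ
    rw [hd]
    exact ciInf_le ⟨0, Set.forall_mem_range.2 fun σ' => norm_nonneg _⟩ σ
  -- a.e. membership in the convex hull
  have hae : ∀ᵐ η ∂(μx x), η ∈ convexHull ℝ (Set.range fun σ : G => σ.1 x) := by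
    rw [MeasureTheory.ae_iff]
    exact hμxsupp x
  -- maximizer of the linear functional over the finite orbit
  obtain ⟨σ₀, hσ₀⟩ := Finite.exists_max fun σ : G => (⟪y, σ.1 x⟫ : ℝ)
  have hA2lb : ∀ η ∈ convexHull ℝ (Set.range fun σ : G => σ.1 x),
      d x y ^ 2 ≤ ‖x‖ ^ 2 + ‖y‖ ^ 2 - 2 * ⟪y, η⟫ := by
    intro η hη
    have hhalf : convexHull ℝ (Set.range fun σ : G => σ.1 x) ⊆
        {w | (⟪y, w⟫ : ℝ) ≤ ⟪y, σ₀.1 x⟫} := by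
      refine convexHull_min ?_ (convex_halfSpace_le
        ⟨fun a b => inner_add_right y a b, fun r a => real_inner_smul_right y a r⟩ _)
      rintro _ ⟨σ, rfl⟩
      exact hσ₀ σ
    have hη' : (⟪y, η⟫ : ℝ) ≤ ⟪y, σ₀.1 x⟫ := hhalf hη
    have hnorm : ‖σ₀.1 x‖ = ‖x‖ := σ₀.1.norm_map x
    have hexp : ‖σ₀.1 x - y‖ ^ 2 = ‖σ₀.1 x‖ ^ 2 - 2 * ⟪σ₀.1 x, y⟫ + ‖y‖ ^ 2 :=
      norm_sub_sq_real _ _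
    have hcomm : (⟪σ₀.1 x, y⟫ : ℝ) = ⟪y, σ₀.1 x⟫ := real_inner_comm _ _
    have hsq : d x y ^ 2 ≤ ‖σ₀.1 x - y‖ ^ 2 := pow_le_pow_left₀ hd0 (hdle σ₀) 2
    rw [hexp, hnorm, hcomm] at hsq
    linarith
  -- integrability of the heat-kernel integrand
  have hinner : Continuous fun η : EuclideanSpace ℝ (Fin N) => (⟪y, η⟫ : ℝ) :=
    continuous_const.inner continuous_id
  have hcont : Continuous fun η : EuclideanSpace ℝ (Fin N) =>
      ck⁻¹ * (2 * t ^ 2) ^ (-(Nb / 2)) *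
        Real.exp (-(‖x‖ ^ 2 + ‖y‖ ^ 2 - 2 * ⟪y, η⟫) / (4 * t ^ 2)) := by
    refine continuous_const.mul (Real.continuous_exp.comp ?_)
    exact ((continuous_const.sub (continuous_const.mul hinner)).neg).div_const _
  have hint : Integrable (fun η : EuclideanSpace ℝ (Fin N) =>
      ck⁻¹ * (2 * t ^ 2) ^ (-(Nb / 2)) *
        Real.exp (-(‖x‖ ^ 2 + ‖y‖ ^ 2 - 2 * ⟪y, η⟫) / (4 * t ^ 2))) (μx x) := by
    refine (integrable_const (ck⁻¹ * (2 * t ^ 2) ^ (-(Nb / 2)))).mono'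
      hcont.aestronglyMeasurable ?_
    filter_upwards [hae] with η hη
    have h0 : 0 ≤ ‖x‖ ^ 2 + ‖y‖ ^ 2 - 2 * ⟪y, η⟫ := le_trans (sq_nonneg _) (hA2lb η hη)
    have he : Real.exp (-(‖x‖ ^ 2 + ‖y‖ ^ 2 - 2 * ⟪y, η⟫) / (4 * t ^ 2)) ≤ 1 := by
      rw [Real.exp_le_one_iff]
      apply div_nonpos_of_nonpos_of_nonneg (by linarith) (by positivity)
    rw [Real.norm_eq_abs, abs_of_nonneg (by positivity)]
    have hcc : 0 ≤ ck⁻¹ * (2 * t ^ 2) ^ (-(Nb / 2)) := by positivity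
    nlinarith [Real.exp_pos (-(‖x‖ ^ 2 + ‖y‖ ^ 2 - 2 * ⟪y, η⟫) / (4 * t ^ 2))]
  -- pointwise bound
  have hrw : ((2:ℝ) * t ^ 2) ^ (-(Nb / 2)) = (2:ℝ) ^ (-(Nb / 2)) * t ^ (-Nb) := by
    rw [Real.mul_rpow (by norm_num) (sq_nonneg t)]
    congr 1
    rw [← Real.rpow_natCast t 2, ← Real.rpow_mul ht.le]
    congr 1
    push_cast
    ring
  have key : ∀ η : EuclideanSpace ℝ (Fin N),
      ‖t ^ (-Nb) * φ (Real.sqrt (‖x‖ ^ 2 + ‖y‖ ^ 2 - 2 * ⟪y, η⟫) / t)‖ ≤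
      K * (ck⁻¹ * (2 * t ^ 2) ^ (-(Nb / 2)) *
        Real.exp (-(‖x‖ ^ 2 + ‖y‖ ^ 2 - 2 * ⟪y, η⟫) / (4 * t ^ 2))) := by
    intro η
    set A2 : ℝ := ‖x‖ ^ 2 + ‖y‖ ^ 2 - 2 * ⟪y, η⟫ with hA2def
    set E : ℝ := Real.exp (-A2 / (4 * t ^ 2)) with hE
    have hEpos : 0 < E := Real.exp_pos _
    have h2 : (2:ℝ) ^ (Nb / 2) * (2:ℝ) ^ (-(Nb / 2)) = 1 := by
      rw [← Real.rpow_add (by norm_num : (0:ℝ) < 2)]; simp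
    have hRHSeq : K * (ck⁻¹ * (2 * t ^ 2) ^ (-(Nb / 2)) * E) =
        M * Real.exp 4⁻¹ * (t ^ (-Nb) * E) := by
      rw [hrw, hK]
      have hckinv : ck * ck⁻¹ = 1 := mul_inv_cancel₀ hck.ne'
      calc M * Real.exp 4⁻¹ * ck * (2:ℝ) ^ (Nb / 2) *
            (ck⁻¹ * ((2:ℝ) ^ (-(Nb / 2)) * t ^ (-Nb)) * E)
          = M * Real.exp 4⁻¹ * (t ^ (-Nb) * E) * (ck * ck⁻¹) *
            ((2:ℝ) ^ (Nb / 2) * (2:ℝ) ^ (-(Nb / 2))) := by ring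
        _ = M * Real.exp 4⁻¹ * (t ^ (-Nb) * E) := by rw [hckinv, h2]; ring
    rw [hRHSeq]
    have htP : (0:ℝ) < t ^ (-Nb) := Real.rpow_pos_of_pos ht _
    rcases le_or_gt A2 (t ^ 2) with h1 | h1
    · have hu0 : 0 ≤ Real.sqrt A2 / t := div_nonneg (Real.sqrt_nonneg _) ht.le
      have hu1 : Real.sqrt A2 / t ≤ 1 := by
        rw [div_le_one ht]
        calc Real.sqrt A2 ≤ Real.sqrt (t ^ 2) := Real.sqrt_le_sqrt h1
          _ = t := Real.sqrt_sq ht.le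
      have hφb : |φ (Real.sqrt A2 / t)| ≤ M := hMb _ hu0 hu1
      have hE1 : 1 ≤ Real.exp 4⁻¹ * E := by
        rw [hE, ← Real.exp_add]
        apply Real.one_le_exp
        have : A2 / (4 * t ^ 2) ≤ 4⁻¹ := by
          rw [div_le_iff₀ (by positivity)]
          nlinarith
        have h4 : -A2 / (4 * t ^ 2) = -(A2 / (4 * t ^ 2)) := by ring
        rw [h4]; linarith
      rw [Real.norm_eq_abs, abs_mul, abs_of_pos htP]
      nlinarith [mul_le_mul_of_nonneg_left hφb htP.le,
        mul_le_mul_of_nonneg_left hE1 (mul_nonneg hMpos.le htP.le)]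
    · have : (1:ℝ) ≤ Real.sqrt A2 / t := by
        rw [le_div_iff₀ ht]
        have : t = Real.sqrt (t ^ 2) := (Real.sqrt_sq ht.le).symm
        calc 1 * t = t := one_mul t
          _ = Real.sqrt (t ^ 2) := this
          _ ≤ Real.sqrt A2 := Real.sqrt_le_sqrt h1.le
      rw [hφsupp _ this]
      simp only [mul_zero, norm_zero]
      positivity
  constructor
  · -- main bound
    have hτb : |τΦ t x y| ≤ K * h (t ^ 2) x y := by
      rw [hτ t x y ht, hh (t ^ 2) x y (by positivity)]
      have hKg : (∫ η, K * (ck⁻¹ * (2 * t ^ 2) ^ (-(Nb / 2)) *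
          Real.exp (-(‖x‖ ^ 2 + ‖y‖ ^ 2 - 2 * ⟪y, η⟫) / (4 * t ^ 2))) ∂(μx x)) =
          K * ∫ η, ck⁻¹ * (2 * t ^ 2) ^ (-(Nb / 2)) *
          Real.exp (-(‖x‖ ^ 2 + ‖y‖ ^ 2 - 2 * ⟪y, η⟫) / (4 * t ^ 2)) ∂(μx x) := by
        exact MeasureTheory.integral_const_mul K _
      rw [← hKg]
      have hle := MeasureTheory.norm_integral_le_of_norm_le (hint.const_mul K)
        (Filter.Eventually.of_forall fun η => key η)
      rw [Real.norm_eq_abs] at hle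
      exact hle
    have hb2 : h (t ^ 2) x y ≤
        C * (max (wB x t) (wB y t))⁻¹ * (1 + ‖x - y‖ / t) ^ (-(2:ℝ)) := by
      have hh2 := hheat (t ^ 2) x y (by positivity)
      rw [Real.sqrt_sq ht.le] at hh2
      refine hh2.trans ?_
      have he : Real.exp (-c * d x y ^ 2 / t ^ 2) ≤ 1 := by
        rw [Real.exp_le_one_iff]
        apply div_nonpos_of_nonpos_of_nonneg _ (by positivity)
        nlinarith [sq_nonneg (d x y)]
      have ha : 0 ≤ C * (max (wB x t) (wB y t))⁻¹ * (1 + ‖x - y‖ / t) ^ (-(2:ℝ)) := by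
        have h1 : 0 < max (wB x t) (wB y t) := lt_max_of_lt_left (hwB x t ht)
        have h2 : 0 ≤ (1 + ‖x - y‖ / t) ^ (-(2:ℝ)) :=
          Real.rpow_nonneg (by positivity) _
        positivity
      exact mul_le_of_le_one_right ha he
    calc |τΦ t x y| ≤ K * h (t ^ 2) x y := hτb
      _ ≤ K * (C * (max (wB x t) (wB y t))⁻¹ * (1 + ‖x - y‖ / t) ^ (-(2:ℝ))) :=
          mul_le_mul_of_nonneg_left hb2 hKpos.le
      _ = K * C * (max (wB x t) (wB y t))⁻¹ * (1 + ‖x - y‖ / t) ^ (-(2:ℝ)) := by ring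
  · -- vanishing
    intro hdt
    rw [hτ t x y ht]
    refine MeasureTheory.integral_eq_zero_of_ae ?_
    filter_upwards [hae] with η hη
    have hA2 := hA2lb η hη
    have hsq : (1:ℝ) ≤ Real.sqrt (‖x‖ ^ 2 + ‖y‖ ^ 2 - 2 * ⟪y, η⟫) / t := by
      rw [le_div_iff₀ ht, one_mul]
      calc t ≤ d x y := hdt.le
        _ = Real.sqrt (d x y ^ 2) := (Real.sqrt_sq hd0).symm
        _ ≤ Real.sqrt (‖x‖ ^ 2 + ‖y‖ ^ 2 - 2 * ⟪y, η⟫) := Real.sqrt_le_sqrt hA2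
    simp only [Pi.zero_apply]
    rw [hφsupp _ hsq, mul_zero]
end

section
/- Subordination bound for small u: if N ≥ 2 and the heat kernel satisfies h_s(x,y) ≤ C w(B(x,√s))^{-1} s/(‖x−y‖² + s), and the volume growth bound w(B(x,t))/w(B(x, t/(2√u))) ≤ C (2√u)^N holds for 0 < u ≤ 1/4, then for ‖x−y‖ ≥ t > 0, the subordinated integral π^{-1/2}∫_0^∞ e^{-u} h_{t²/(4u)}(x,y) u^{-1/2} du is bounded by C' w(B(x,t))^{-1} t²/‖x−y‖². -/
open MeasureTheory Metric

open Set

noncomputable def subF (C : ℝ) (N : ℕ) (Nb : ℝ) (u : ℝ) : ℝ :=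
  if u ≤ 1/4 then C^2 * 2^N / 4 * (Real.exp (-u) * u ^ ((N:ℝ)/2 - 3/2))
  else C^2 * (2:ℝ)^(Nb) / 4 * (Real.exp (-u) * u ^ (Nb/2 - 3/2))

lemma subF_nonneg (C : ℝ) (N : ℕ) (Nb : ℝ) {u : ℝ} (hu : 0 < u) : 0 ≤ subF C N Nb u := by
  unfold subF
  split <;> positivity

lemma aux_int2 (Nb : ℝ) :
    IntegrableOn (fun u : ℝ => Real.exp (-u) * u ^ (Nb/2 - 3/2)) (Set.Ioi (1/4 : ℝ)) := by
  rcases le_or_gt Nb 3 with hb | hb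
  · have hint : IntegrableOn (fun u : ℝ => (1/4:ℝ) ^ (Nb/2 - 3/2) * Real.exp (-u))
        (Set.Ioi (1/4 : ℝ)) := by
      have := (exp_neg_integrableOn_Ioi (1/4 : ℝ) (b := 1) one_pos).const_mul
        ((1/4:ℝ) ^ (Nb/2 - 3/2))
      simpa [IntegrableOn] using this
    refine hint.mono' ?_ ?_
    · refine ContinuousOn.aestronglyMeasurable ?_ measurableSet_Ioi
      intro u hu
      have hu0 : u ≠ 0 := ne_of_gt (lt_trans (by norm_num) hu)
      exact ((Real.continuous_exp.comp continuous_neg).continuousAt.continuousWithinAt).mul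
        ((Real.continuousAt_rpow_const u _ (Or.inl hu0)).continuousWithinAt)
    · filter_upwards [ae_restrict_mem measurableSet_Ioi] with u hu
      have hu0 : (0:ℝ) < u := lt_trans (by norm_num) hu
      rw [Real.norm_eq_abs, abs_of_nonneg (by positivity)]
      rw [mul_comm ((1/4:ℝ) ^ (Nb/2 - 3/2))]
      refine mul_le_mul_of_nonneg_left ?_ (Real.exp_nonneg _)
      exact Real.rpow_le_rpow_of_nonpos (by norm_num) hu.le (by linarith)
  · have := Real.GammaIntegral_convergent (s := Nb/2 - 1/2) (by linarith)
    have h2 : (Nb/2 - 1/2) - 1 = Nb/2 - 3/2 := by ring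
    rw [h2] at this
    exact this.mono_set (Set.Ioi_subset_Ioi (by norm_num))

lemma aux_int1 (N : ℕ) (hN : 2 ≤ N) :
    IntegrableOn (fun u : ℝ => Real.exp (-u) * u ^ ((N:ℝ)/2 - 3/2)) (Set.Ioi (0 : ℝ)) := by
  have hN' : (2:ℝ) ≤ N := by exact_mod_cast hN
  have := Real.GammaIntegral_convergent (s := (N:ℝ)/2 - 1/2) (by linarith)
  have h2 : ((N:ℝ)/2 - 1/2) - 1 = (N:ℝ)/2 - 3/2 := by ring
  rwa [h2] at this

lemma subF_integrable (C : ℝ) (N : ℕ) (hN : 2 ≤ N) (Nb : ℝ) :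
    IntegrableOn (subF C N Nb) (Set.Ioi (0:ℝ)) := by
  have hsplit : Set.Ioi (0:ℝ) = Set.Ioc 0 (1/4) ∪ Set.Ioi (1/4) :=
    (Set.Ioc_union_Ioi_eq_Ioi (by norm_num)).symm
  rw [hsplit, integrableOn_union]
  constructor
  · have h1 : IntegrableOn (fun u : ℝ => C^2 * 2^N / 4 * (Real.exp (-u) * u ^ ((N:ℝ)/2 - 3/2)))
        (Set.Ioc (0:ℝ) (1/4)) :=
      IntegrableOn.mono_set ((aux_int1 N hN).const_mul _) Set.Ioc_subset_Ioi_self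
    refine h1.congr_fun ?_ measurableSet_Ioc
    intro u hu
    have : u ≤ 1/4 := hu.2
    simp only [subF, if_pos this]
  · have h2 : IntegrableOn (fun u : ℝ => C^2 * (2:ℝ)^Nb / 4 * (Real.exp (-u) * u ^ (Nb/2 - 3/2)))
        (Set.Ioi ((1/4):ℝ)) := (aux_int2 Nb).const_mul _
    refine h2.congr_fun ?_ measurableSet_Ioi
    intro u hu
    simp only [Set.mem_Ioi] at hu
    have : ¬ (u ≤ 1/4) := not_le.mpr hu
    simp only [subF, if_neg this]

lemma sqrt_quarter : Real.sqrt (1/4 : ℝ) = 1/2 := by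
  rw [show (1/4:ℝ) = (1/2)^2 by norm_num, Real.sqrt_sq (by norm_num)]

lemma sqrt_four_mul {u : ℝ} (hu : 0 ≤ u) : Real.sqrt (4 * u) = 2 * Real.sqrt u := by
  rw [Real.sqrt_mul (by norm_num) u, show (4:ℝ) = 2^2 by norm_num, Real.sqrt_sq (by norm_num)]

lemma sqrt_pow_nat {u : ℝ} (hu : 0 < u) (N : ℕ) :
    (Real.sqrt u) ^ N = u ^ ((N:ℝ)/2) := by
  rw [Real.sqrt_eq_rpow, ← Real.rpow_natCast (u ^ ((1:ℝ)/2)) N, ← Real.rpow_mul hu.le]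
  congr 1; ring

lemma sqrt_rpow {u : ℝ} (hu : 0 < u) (b : ℝ) :
    (Real.sqrt u) ^ b = u ^ (b/2) := by
  rw [Real.sqrt_eq_rpow, ← Real.rpow_mul hu.le]
  congr 1; ring

/-- Subordination bound: for `N ≥ 2` and `‖x-y‖ ≥ t`, the subordinated Poisson-type
integral of the heat kernel is bounded by `C' w(B(x,t))⁻¹ t²/‖x-y‖²`. -/
theorem subordination_small_u_bound (N : ℕ) (hN : 2 ≤ N) (Nb : ℝ)
    (wB : EuclideanSpace ℝ (Fin N) → ℝ → ℝ)
    (hwpos : ∀ x r, 0 < r → 0 < wB x r)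
    (h : ℝ → EuclideanSpace ℝ (Fin N) → EuclideanSpace ℝ (Fin N) → ℝ)
    (hnn : ∀ s x y, 0 < s → 0 ≤ h s x y)
    (C : ℝ) (hC : 0 < C)
    (hh : ∀ s x y, 0 < s →
      h s x y ≤ C * (wB x (Real.sqrt s))⁻¹ * (s / (‖x - y‖ ^ 2 + s)))
    (hvol : ∀ (x : EuclideanSpace ℝ (Fin N)) (t u : ℝ), 0 < t → 0 < u → u ≤ 1 / 4 →
      wB x t / wB x (t / (2 * Real.sqrt u)) ≤ C * (2 * Real.sqrt u) ^ N)
    (hgrow : ∀ (x : EuclideanSpace ℝ (Fin N)) (r₁ r₂ : ℝ), 0 < r₁ → r₁ < r₂ →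
      C⁻¹ * (r₂ / r₁) ^ N ≤ wB x r₂ / wB x r₁ ∧
        wB x r₂ / wB x r₁ ≤ C * (r₂ / r₁) ^ Nb) :
    ∃ C' : ℝ, 0 < C' ∧ ∀ (t : ℝ) (x y : EuclideanSpace ℝ (Fin N)),
      0 < t → t ≤ ‖x - y‖ →
      Real.pi ^ (-(1 : ℝ) / 2) *
          (∫ u in Set.Ioi (0 : ℝ),
            Real.exp (-u) * h (t ^ 2 / (4 * u)) x y * u ^ (-(1 : ℝ) / 2)) ≤
        C' * (wB x t)⁻¹ * (t ^ 2 / ‖x - y‖ ^ 2) := by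
  set K := ∫ u in Set.Ioi (0:ℝ), subF C N Nb u with hKdef
  have hpi : (0:ℝ) ≤ Real.pi ^ (-(1:ℝ)/2) := Real.rpow_nonneg Real.pi_pos.le _
  have hK : 0 ≤ K :=
    setIntegral_nonneg measurableSet_Ioi fun u hu => subF_nonneg C N Nb hu
  refine ⟨Real.pi ^ (-(1:ℝ)/2) * K + 1, by positivity, ?_⟩
  intro t x y ht hr
  have hr0 : (0:ℝ) < ‖x - y‖ := lt_of_lt_of_le ht hr
  have ha : 0 < wB x t := hwpos x t ht
  set M := (wB x t)⁻¹ * (t^2 / ‖x - y‖^2) with hMdef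
  have hM0 : 0 ≤ M := by positivity
  -- pointwise bound
  have claim : ∀ u ∈ Set.Ioi (0:ℝ),
      Real.exp (-u) * h (t ^ 2 / (4 * u)) x y * u ^ (-(1 : ℝ) / 2) ≤ M * subF C N Nb u := by
    intro u hu
    simp only [Set.mem_Ioi] at hu
    have hs : 0 < t^2 / (4*u) := by positivity
    have hsu : 0 < Real.sqrt u := Real.sqrt_pos.mpr hu
    have hrad : 0 < t / (2*Real.sqrt u) := by positivity
    have hb : 0 < wB x (t / (2*Real.sqrt u)) := hwpos x _ hrad
    have hsq : Real.sqrt (t^2 / (4*u)) = t / (2*Real.sqrt u) := by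
      rw [Real.sqrt_div (by positivity) (4*u), Real.sqrt_sq ht.le, sqrt_four_mul hu.le]
    have step1 : h (t^2/(4*u)) x y ≤
        C * (wB x (t / (2*Real.sqrt u)))⁻¹ * ((t^2/(4*u)) / (‖x - y‖^2 + t^2/(4*u))) := by
      have := hh (t^2/(4*u)) x y hs
      rwa [hsq] at this
    have hfrac : (t^2/(4*u)) / (‖x - y‖^2 + t^2/(4*u)) ≤ (t^2/(4*u)) / ‖x - y‖^2 :=
      div_le_div_of_nonneg_left hs.le (by positivity) (le_add_of_nonneg_right hs.le)
    by_cases hu4 : u ≤ 1/4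
    · -- small u : use hvol
      have hratio := hvol x t u ht hu hu4
      have hinv : (wB x (t / (2*Real.sqrt u)))⁻¹ ≤
          C * (2*Real.sqrt u)^N * (wB x t)⁻¹ := by
        have h1 : wB x t * (wB x (t / (2*Real.sqrt u)))⁻¹ ≤ C * (2*Real.sqrt u)^N := by
          rw [← div_eq_mul_inv]; exact hratio
        calc (wB x (t / (2*Real.sqrt u)))⁻¹
            = (wB x t * (wB x (t / (2*Real.sqrt u)))⁻¹) * (wB x t)⁻¹ := by
              field_simp
          _ ≤ (C * (2*Real.sqrt u)^N) * (wB x t)⁻¹ :=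
              mul_le_mul_of_nonneg_right h1 (by positivity)
      have htot : h (t^2/(4*u)) x y ≤
          C * (C * (2*Real.sqrt u)^N * (wB x t)⁻¹) * ((t^2/(4*u)) / ‖x - y‖^2) := by
        refine step1.trans ?_
        refine mul_le_mul (mul_le_mul_of_nonneg_left hinv hC.le) hfrac (by positivity) ?_
        have : (0:ℝ) ≤ (2*Real.sqrt u)^N := by positivity
        positivity
      have hmul : Real.exp (-u) * h (t^2/(4*u)) x y * u ^ (-(1:ℝ)/2) ≤
          Real.exp (-u) * (C * (C * (2*Real.sqrt u)^N * (wB x t)⁻¹) *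
            ((t^2/(4*u)) / ‖x - y‖^2)) * u ^ (-(1:ℝ)/2) := by
        refine mul_le_mul_of_nonneg_right ?_ (Real.rpow_nonneg hu.le _)
        exact mul_le_mul_of_nonneg_left htot (Real.exp_nonneg _)
      refine hmul.trans_eq ?_
      rw [subF, if_pos hu4, hMdef]
      rw [mul_pow, sqrt_pow_nat hu N]
      rw [show ((N:ℝ)/2 - 3/2) = ((N:ℝ)/2 + (-1)) + (-(1:ℝ)/2) by ring,
        Real.rpow_add hu, Real.rpow_add hu, Real.rpow_neg_one]
      field_simp
    · -- large u : use hgrow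
      push_neg at hu4
      have h2su : 1 < 2*Real.sqrt u := by
        have h1 : Real.sqrt (1/4 : ℝ) < Real.sqrt u := Real.sqrt_lt_sqrt (by norm_num) hu4
        rw [sqrt_quarter] at h1
        linarith
      have hlt : t / (2*Real.sqrt u) < t := div_lt_self ht h2su
      have hgr := (hgrow x (t / (2*Real.sqrt u)) t hrad hlt).2
      have hdiv : t / (t / (2*Real.sqrt u)) = 2*Real.sqrt u := by
        field_simp
      rw [hdiv] at hgr
      have hinv : (wB x (t / (2*Real.sqrt u)))⁻¹ ≤
          C * (2*Real.sqrt u)^Nb * (wB x t)⁻¹ := by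
        have h1 : wB x t * (wB x (t / (2*Real.sqrt u)))⁻¹ ≤ C * (2*Real.sqrt u)^Nb := by
          rw [← div_eq_mul_inv]; exact hgr
        calc (wB x (t / (2*Real.sqrt u)))⁻¹
            = (wB x t * (wB x (t / (2*Real.sqrt u)))⁻¹) * (wB x t)⁻¹ := by
              field_simp
          _ ≤ (C * (2*Real.sqrt u)^Nb) * (wB x t)⁻¹ :=
              mul_le_mul_of_nonneg_right h1 (by positivity)
      have htot : h (t^2/(4*u)) x y ≤
          C * (C * (2*Real.sqrt u)^Nb * (wB x t)⁻¹) * ((t^2/(4*u)) / ‖x - y‖^2) := by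
        refine step1.trans ?_
        refine mul_le_mul (mul_le_mul_of_nonneg_left hinv hC.le) hfrac (by positivity) ?_
        have : (0:ℝ) ≤ (2*Real.sqrt u)^Nb := Real.rpow_nonneg (by positivity) _
        positivity
      have hmul : Real.exp (-u) * h (t^2/(4*u)) x y * u ^ (-(1:ℝ)/2) ≤
          Real.exp (-u) * (C * (C * (2*Real.sqrt u)^Nb * (wB x t)⁻¹) *
            ((t^2/(4*u)) / ‖x - y‖^2)) * u ^ (-(1:ℝ)/2) := by
        refine mul_le_mul_of_nonneg_right ?_ (Real.rpow_nonneg hu.le _)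
        exact mul_le_mul_of_nonneg_left htot (Real.exp_nonneg _)
      refine hmul.trans_eq ?_
      rw [subF, if_neg (not_le.mpr hu4), hMdef]
      rw [Real.mul_rpow (by norm_num) (Real.sqrt_nonneg u), sqrt_rpow hu Nb]
      rw [show (Nb/2 - 3/2) = (Nb/2 + (-1)) + (-(1:ℝ)/2) by ring,
        Real.rpow_add hu, Real.rpow_add hu, Real.rpow_neg_one]
      field_simp
  -- integrate
  have hfint : Integrable (fun u => M * subF C N Nb u) (volume.restrict (Set.Ioi (0:ℝ))) :=
    (subF_integrable C N hN Nb).const_mul M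
  have hg0 : 0 ≤ᵐ[volume.restrict (Set.Ioi (0:ℝ))]
      fun u => Real.exp (-u) * h (t ^ 2 / (4 * u)) x y * u ^ (-(1 : ℝ) / 2) := by
    filter_upwards [ae_restrict_mem measurableSet_Ioi] with u hu
    simp only [Set.mem_Ioi] at hu
    have hs : 0 < t^2/(4*u) := by positivity
    exact mul_nonneg (mul_nonneg (Real.exp_nonneg _) (hnn _ _ _ hs)) (Real.rpow_nonneg hu.le _)
  have hle : (fun u => Real.exp (-u) * h (t ^ 2 / (4 * u)) x y * u ^ (-(1 : ℝ) / 2))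
      ≤ᵐ[volume.restrict (Set.Ioi (0:ℝ))] fun u => M * subF C N Nb u := by
    filter_upwards [ae_restrict_mem measurableSet_Ioi] with u hu
    exact claim u hu
  have hint := integral_mono_of_nonneg hg0 hfint hle
  rw [integral_const_mul] at hint
  calc Real.pi ^ (-(1 : ℝ) / 2) *
        (∫ u in Set.Ioi (0 : ℝ),
          Real.exp (-u) * h (t ^ 2 / (4 * u)) x y * u ^ (-(1 : ℝ) / 2))
      ≤ Real.pi ^ (-(1 : ℝ) / 2) * (M * K) := mul_le_mul_of_nonneg_left hint hpi
    _ = (Real.pi ^ (-(1 : ℝ) / 2) * K) * M := by ring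
    _ ≤ (Real.pi ^ (-(1 : ℝ) / 2) * K + 1) * M := by nlinarith
    _ = (Real.pi ^ (-(1 : ℝ) / 2) * K + 1) * (wB x t)⁻¹ * (t ^ 2 / ‖x - y‖ ^ 2) := by
        rw [hMdef]; ring
end
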